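/- arXiv:1305.0139 — 5 statements merged into one kernel-verified Lean document; each statement's English description precedes it below -/
import Mathlib

section
/- Let T be a non-negative random variable such that P(T > t) ≤ e^{-μt} for all t > 0, where μ > 0. Then for any α with α < μ/√2, one has E[e^{αT}] ≤ 1 + α E[T] + 2(e+1)α²/μ². -/
open MeasureTheory Real Filter Set

/-- If a non-negative random variable `T` satisfies the tail bound
`P(T > t) ≤ e^{-μ t}` for all `t > 0`, then for any `α < μ/√2`,
`E[e^{α T}] ≤ 1 + α E[T] + 2(e+1) α² / μ²`. -/
theorem stmt_0 {Ω : Type*} [MeasurableSpace Ω] (P : Measure Ω) [IsProbabilityMeasure P]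
    (T : Ω → ℝ) (hTmeas : Measurable T) (hTpos : ∀ ω, 0 ≤ T ω)
    (μ : ℝ) (hμ : 0 < μ)
    (htail : ∀ t : ℝ, 0 < t → P {ω | t < T ω} ≤ ENNReal.ofReal (Real.exp (-μ * t)))
    (α : ℝ) (hα : α < μ / Real.sqrt 2) :
    ∫ ω, Real.exp (α * T ω) ∂P ≤
      1 + α * ∫ ω, T ω ∂P + 2 * (Real.exp 1 + 1) * α ^ 2 / μ ^ 2 := by
  -- numerics
  have hs2 : (1.41:ℝ) ≤ Real.sqrt 2 := by
    rw [show (1.41:ℝ) = Real.sqrt (1.41^2) by rw [Real.sqrt_sq]; norm_num]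
    exact Real.sqrt_le_sqrt (by norm_num)
  have hs2pos : (0:ℝ) < Real.sqrt 2 := by linarith
  have hα2 : α * Real.sqrt 2 < μ := by
    rwa [lt_div_iff₀ hs2pos] at hα
  have hαμ : α < μ := by nlinarith
  have hμα : 0 < μ - α := by linarith
  have he1 : (2.7:ℝ) ≤ Real.exp 1 := by
    have := Real.exp_one_gt_d9; linarith
  have he2 : Real.exp 1 ≤ 2.72 := by
    have := Real.exp_one_lt_d9; linarith
  have hkey : μ ≤ 2 * (Real.exp 1 + 1) * (μ - α) := by
    rcases le_or_gt α 0 with h | h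
    · nlinarith
    · nlinarith
  set I : ℝ := α ^ 2 / ((μ - α) * μ) with hI
  have hIle : I ≤ 2 * (Real.exp 1 + 1) * α ^ 2 / μ ^ 2 := by
    rw [hI, div_le_div_iff₀ (by positivity) (by positivity)]
    nlinarith [mul_le_mul_of_nonneg_left hkey (mul_nonneg (sq_nonneg α) hμ.le)]
  have hInonneg : 0 ≤ I := div_nonneg (sq_nonneg _) (by positivity)
  -- the weight function
  set g : ℝ → ℝ := fun t => α * Real.exp (α * t) - α with hg
  have hgcont : Continuous g := by
    exact (continuous_const.mul ((continuous_const.mul continuous_id).rexp)).sub continuous_const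
  have hgint : ∀ t > (0:ℝ), IntervalIntegrable g volume 0 t := fun t _ =>
    hgcont.intervalIntegrable _ _
  have hg_nn : ∀ t ∈ Ioi (0:ℝ), 0 ≤ g t := by
    intro t ht
    simp only [hg]
    have ht' : (0:ℝ) < t := ht
    rcases le_or_gt 0 α with h | h
    · have h1 : 1 ≤ Real.exp (α * t) := Real.one_le_exp (mul_nonneg h ht'.le)
      nlinarith
    · have h1 : Real.exp (α * t) ≤ 1 :=
        Real.exp_le_one_iff.mpr (mul_nonpos_of_nonpos_of_nonneg h.le ht'.le)
      nlinarith
  -- the antiderivative of g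
  have hFder : ∀ x : ℝ, HasDerivAt (fun t => Real.exp (α * t) - α * t - 1) (g x) x := by
    intro x
    have h1 : HasDerivAt (fun t : ℝ => α * t) α x := by
      simpa using (hasDerivAt_id x).const_mul α
    simpa [hg, mul_comm] using (h1.exp.sub h1).sub_const 1
  have hgval : ∀ x : ℝ, ∫ t in (0:ℝ)..x, g t = Real.exp (α * x) - 1 - α * x := by
    intro x
    rw [intervalIntegral.integral_eq_sub_of_hasDerivAt (fun t _ => hFder t)
      (hgcont.intervalIntegrable _ _)]
    simp
    ring
  -- the dominating function h and its integral
  set h : ℝ → ℝ := fun t => α * Real.exp (-(μ - α) * t) - α * Real.exp (-μ * t) with hh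
  have hhint : IntegrableOn h (Ioi 0) := by
    exact ((exp_neg_integrableOn_Ioi 0 hμα).const_mul α).sub
      ((exp_neg_integrableOn_Ioi 0 hμ).const_mul α)
  have hheq : ∀ t : ℝ, Real.exp (-μ * t) * g t = h t := by
    intro t
    simp only [hh, hg]
    rw [show -(μ - α) * t = α * t + -μ * t by ring, Real.exp_add]
    ring
  have hF2der : ∀ x : ℝ, HasDerivAt
      (fun t => -α / (μ - α) * Real.exp (-(μ - α) * t) + α / μ * Real.exp (-μ * t)) (h x) x := by
    intro x
    have e1 : HasDerivAt (fun t : ℝ => -(μ - α) * t) (-(μ - α)) x := by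
      simpa using (hasDerivAt_id x).const_mul (-(μ - α))
    have e2 : HasDerivAt (fun t : ℝ => -μ * t) (-μ) x := by
      simpa using (hasDerivAt_id x).const_mul (-μ)
    have := (e1.exp.const_mul (-α / (μ - α))).add (e2.exp.const_mul (α / μ))
    convert this using 1
    · rfl
    · rfl
    · rfl
    simp only [hh]
    field_simp
    ring
  have htend : Tendsto
      (fun t => -α / (μ - α) * Real.exp (-(μ - α) * t) + α / μ * Real.exp (-μ * t))
      atTop (nhds 0) := by
    have l1 : Tendsto (fun t : ℝ => Real.exp (-(μ - α) * t)) atTop (nhds 0) := by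
      simp only [neg_mul]
      exact Real.tendsto_exp_neg_atTop_nhds_zero.comp (tendsto_id.const_mul_atTop hμα)
    have l2 : Tendsto (fun t : ℝ => Real.exp (-μ * t)) atTop (nhds 0) := by
      simp only [neg_mul]
      exact Real.tendsto_exp_neg_atTop_nhds_zero.comp (tendsto_id.const_mul_atTop hμ)
    have := ((l1.const_mul (-α / (μ - α))).add (l2.const_mul (α / μ)))
    simpa using this
  have hhval : ∫ t in Ioi (0:ℝ), h t = I := by
    rw [integral_Ioi_of_hasDerivAt_of_tendsto' (fun x _ => hF2der x) hhint htend]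
    simp only [hI, mul_zero, Real.exp_zero]
    field_simp
    ring
  -- finiteness of ∫⁻ ofReal (exp (-μ t)) over Ioi 0
  have hexpfin : ∫⁻ t in Ioi (0:ℝ), ENNReal.ofReal (Real.exp (-μ * t)) < ⊤ := by
    have := (exp_neg_integrableOn_Ioi 0 hμ).hasFiniteIntegral
    rwa [hasFiniteIntegral_iff_ofReal (ae_of_all _ fun t => (Real.exp_pos _).le)] at this
  -- T is integrable
  have hTint : Integrable T P := by
    refine ⟨hTmeas.aestronglyMeasurable, ?_⟩
    rw [hasFiniteIntegral_iff_ofReal (ae_of_all _ hTpos),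
      lintegral_eq_lintegral_meas_lt P (ae_of_all _ hTpos) hTmeas.aemeasurable]
    refine lt_of_le_of_lt ?_ hexpfin
    refine lintegral_mono_ae ?_
    filter_upwards [ae_restrict_mem measurableSet_Ioi] with t ht
    exact htail t ht
  -- layer cake for D ω = exp (α T ω) - 1 - α T ω
  have hLC := lintegral_comp_eq_lintegral_meas_lt_mul P (f := T) (g := g)
    (ae_of_all _ hTpos) hTmeas.aemeasurable hgint
    ((ae_restrict_iff' measurableSet_Ioi).mpr (ae_of_all _ hg_nn))
  have hLC' : ∫⁻ ω, ENNReal.ofReal (Real.exp (α * T ω) - 1 - α * T ω) ∂P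
      = ∫⁻ t in Ioi 0, P {a | t < T a} * ENNReal.ofReal (g t) := by
    rw [← hLC]
    congr 1
    funext ω
    rw [hgval]
  have hbound : ∫⁻ t in Ioi (0:ℝ), P {a | t < T a} * ENNReal.ofReal (g t)
      ≤ ENNReal.ofReal I := by
    have step1 : ∫⁻ t in Ioi (0:ℝ), P {a | t < T a} * ENNReal.ofReal (g t)
        ≤ ∫⁻ t in Ioi (0:ℝ), ENNReal.ofReal (h t) := by
      refine lintegral_mono_ae ?_
      filter_upwards [ae_restrict_mem measurableSet_Ioi] with t ht
      calc P {a | t < T a} * ENNReal.ofReal (g t)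
          ≤ ENNReal.ofReal (Real.exp (-μ * t)) * ENNReal.ofReal (g t) :=
            mul_le_mul_left (htail t ht) _
        _ = ENNReal.ofReal (Real.exp (-μ * t) * g t) :=
            (ENNReal.ofReal_mul (Real.exp_pos _).le).symm
        _ = ENNReal.ofReal (h t) := by rw [hheq]
    have step2 : ∫⁻ t in Ioi (0:ℝ), ENNReal.ofReal (h t) = ENNReal.ofReal I := by
      rw [← ofReal_integral_eq_lintegral_ofReal hhint ?_, hhval]
      filter_upwards [ae_restrict_mem measurableSet_Ioi] with t ht
      rw [← hheq t]
      exact mul_nonneg (Real.exp_pos _).le (hg_nn t ht)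
    exact step1.trans_eq step2
  set D : Ω → ℝ := fun ω => Real.exp (α * T ω) - 1 - α * T ω with hD
  have hDnn : ∀ ω, 0 ≤ D ω := by
    intro ω
    have := Real.add_one_le_exp (α * T ω)
    simp only [hD]; linarith
  have hDmeas : Measurable D := by
    exact ((measurable_const.mul hTmeas).exp.sub measurable_const).sub
      (measurable_const.mul hTmeas)
  have hDlint : ∫⁻ ω, ENNReal.ofReal (D ω) ∂P ≤ ENNReal.ofReal I := hLC'.trans_le hbound
  have hDint : Integrable D P := by
    refine ⟨hDmeas.aestronglyMeasurable, ?_⟩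
    rw [hasFiniteIntegral_iff_ofReal (ae_of_all _ hDnn)]
    exact lt_of_le_of_lt hDlint ENNReal.ofReal_lt_top
  have hDile : ∫ ω, D ω ∂P ≤ I := by
    rw [integral_eq_lintegral_of_nonneg_ae (ae_of_all _ hDnn) hDmeas.aestronglyMeasurable]
    exact ENNReal.toReal_le_of_le_ofReal hInonneg hDlint
  -- put everything together
  have hsplit : ∫ ω, Real.exp (α * T ω) ∂P
      = (∫ ω, D ω ∂P) + (1 + α * ∫ ω, T ω ∂P) := by
    have : (fun ω => Real.exp (α * T ω)) = fun ω => D ω + (1 + α * T ω) := by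
      funext ω; simp only [hD]; ring
    have h3 : Integrable (fun ω => α * T ω) P := hTint.const_mul α
    have h2 : Integrable (fun ω => (1:ℝ) + α * T ω) P := (integrable_const 1).add h3
    rw [this, integral_add hDint h2, integral_add (integrable_const 1) h3,
      integral_const, integral_const_mul]
    simp
  rw [hsplit]
  have : (∫ ω, D ω ∂P) ≤ 2 * (Real.exp 1 + 1) * α ^ 2 / μ ^ 2 := hDile.trans hIle
  linarith
end

section
/- For every real x ≥ √2, one has (x - 1)·eˣ ≥ x³/2. -/
/-- For every real `x ≥ √2`, one has `(x - 1)·eˣ ≥ x³/2`. -/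
theorem stmt_2 (x : ℝ) (hx : Real.sqrt 2 ≤ x) :
    x ^ 3 / 2 ≤ (x - 1) * Real.exp x := by
  have h0 : (0:ℝ) ≤ x := le_trans (Real.sqrt_nonneg 2) hx
  have h2 : 2 ≤ x ^ 2 := by
    have := Real.sq_sqrt (by norm_num : (0:ℝ) ≤ 2)
    nlinarith [Real.sqrt_nonneg 2]
  have h1 : 1 ≤ x := by nlinarith
  have hexp := Real.sum_le_exp_of_nonneg h0 4
  have hexp' : 1 + x + x ^ 2 / 2 + x ^ 3 / 6 ≤ Real.exp x := by
    have := hexp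
    simp [Finset.sum_range_succ, Nat.factorial] at this
    linarith
  nlinarith [hexp', sq_nonneg x, sq_nonneg (x-1), sq_nonneg (x^2 - x)]
end

section
/- Let A be a finite connected subset of ℤ² and let R be the smallest axis-aligned rectangle in ℤ² containing A. Then |∂*_e R| ≤ |∂*_e A|, where ∂*_e denotes the outer edge boundary. -/
/-- Nearest-neighbour adjacency on `ℤ^d`. -/
def latAdj {d : ℕ} (x y : Fin d → ℤ) : Prop := (∑ i, |x i - y i|) = 1

/-- The unbounded (infinite) connected component of the complement of `A`:
points outside `A` whose connected component in the complement is infinite. -/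
def extComp {d : ℕ} (A : Set (Fin d → ℤ)) : Set (Fin d → ℤ) :=
  {y | y ∉ A ∧
    {z | Relation.ReflTransGen (fun u v => latAdj u v ∧ u ∉ A ∧ v ∉ A) y z}.Infinite}

/-- The outer vertex boundary `∂*A`: points of `A` adjacent to the unbounded
component of the complement. -/
def outerVB {d : ℕ} (A : Set (Fin d → ℤ)) : Set (Fin d → ℤ) :=
  {x | x ∈ A ∧ ∃ y ∈ extComp A, latAdj x y}

/-- The outer edge boundary `∂*_e A`: edges `(x,y)` with `x ∈ A` and `y` in the
unbounded component of the complement. -/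
def outerEB {d : ℕ} (A : Set (Fin d → ℤ)) : Set ((Fin d → ℤ) × (Fin d → ℤ)) :=
  {e | e.1 ∈ A ∧ e.2 ∈ extComp A ∧ latAdj e.1 e.2}

/-- `A` is connected with respect to nearest-neighbour adjacency. -/
def ConnSet {d : ℕ} (A : Set (Fin d → ℤ)) : Prop :=
  ∀ x ∈ A, ∀ y ∈ A, Relation.ReflTransGen (fun u v => latAdj u v ∧ u ∈ A ∧ v ∈ A) x y

/-- An axis-aligned lattice box (rectangle when `d = 2`). -/
def IsBox {d : ℕ} (R : Set (Fin d → ℤ)) : Prop :=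
  ∃ a b : Fin d → ℤ, R = {x | ∀ i, a i ≤ x i ∧ x i ≤ b i}

/-- The projection of `A` onto the hyperplane orthogonal to the `i`-th coordinate. -/
def latProj {d : ℕ} (A : Set (Fin d → ℤ)) (i : Fin d) : Set (Fin d → ℤ) :=
  (fun x => Function.update x i 0) '' A

lemma latAdj_iff {x y : Fin 2 → ℤ} :
    latAdj x y ↔ ∃ i : Fin 2, ∃ s : ℤ, (s = 1 ∨ s = -1) ∧ y = Function.update x i (x i + s) := by
  unfold latAdj
  rw [Fin.sum_univ_two]
  constructor
  · intro h
    have hcase : (x 0 = y 0 ∧ (y 1 = x 1 + 1 ∨ y 1 = x 1 + (-1))) ∨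
        (x 1 = y 1 ∧ (y 0 = x 0 + 1 ∨ y 0 = x 0 + (-1))) := by
      rcases abs_cases (x 0 - y 0) with ⟨h1, h2⟩ | ⟨h1, h2⟩ <;>
        rcases abs_cases (x 1 - y 1) with ⟨h3, h4⟩ | ⟨h3, h4⟩ <;> omega
    rcases hcase with ⟨h0, h1 | h1⟩ | ⟨h0, h1 | h1⟩
    · exact ⟨1, 1, Or.inl rfl, funext fun j => by fin_cases j <;> simp [Function.update] <;> omega⟩
    · exact ⟨1, -1, Or.inr rfl, funext fun j => by fin_cases j <;> simp [Function.update] <;> omega⟩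
    · exact ⟨0, 1, Or.inl rfl, funext fun j => by fin_cases j <;> simp [Function.update] <;> omega⟩
    · exact ⟨0, -1, Or.inr rfl, funext fun j => by fin_cases j <;> simp [Function.update] <;> omega⟩
  · rintro ⟨i, s, hs, rfl⟩
    fin_cases i <;> rcases hs with rfl | rfl <;>
      simp [Function.update] <;>
      rcases abs_cases (x 0 - (x 0 + 1)) with ⟨h1, h2⟩ | ⟨h1, h2⟩ <;>
      rcases abs_cases (x 0 - (x 0 + -1)) with ⟨h3, h4⟩ | ⟨h3, h4⟩ <;>
      rcases abs_cases (x 1 - (x 1 + 1)) with ⟨h5, h6⟩ | ⟨h5, h6⟩ <;>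
      rcases abs_cases (x 1 - (x 1 + -1)) with ⟨h7, h8⟩ | ⟨h7, h8⟩ <;> omega


lemma latAdj_update {z : Fin 2 → ℤ} {i : Fin 2} {s : ℤ} (hs : s = 1 ∨ s = -1) :
    latAdj z (Function.update z i (z i + s)) :=
  latAdj_iff.mpr ⟨i, s, hs, rfl⟩

lemma ray_step (y : Fin 2 → ℤ) (i : Fin 2) (s : ℤ) (n : ℕ) :
    Function.update y i (y i + s * (n + 1)) =
      Function.update (Function.update y i (y i + s * n)) i
        ((Function.update y i (y i + s * n)) i + s) := by
  simp [Function.update_self]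
  ring_nf

lemma ray_ext {S : Set (Fin 2 → ℤ)} {y : Fin 2 → ℤ} {i : Fin 2} {s : ℤ}
    (hs : s = 1 ∨ s = -1)
    (h : ∀ n : ℕ, Function.update y i (y i + s * n) ∉ S) : y ∈ extComp S := by
  have hy0 : Function.update y i (y i + s * (0:ℕ)) = y := by simp
  refine ⟨by rw [← hy0]; exact h 0, ?_⟩
  apply Set.infinite_of_injective_forall_mem
    (f := fun n : ℕ => Function.update y i (y i + s * n))
  case hi =>
    intro m n hmn
    have := congrFun hmn i
    simp [Function.update_self] at this
    rcases hs with rfl | rfl <;> omega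
  case hf =>
    intro n
    simp only [Set.mem_setOf_eq]
    induction n with
    | zero => rw [hy0]
    | succ n ih =>
      refine Relation.ReflTransGen.tail ih ⟨?_, h n, h (n+1)⟩
      have hr := ray_step y i s n
      push_cast at hr ⊢
      rw [hr]
      exact latAdj_update hs

lemma ivt {A : Set (Fin 2 → ℤ)} {j : Fin 2} {x y : Fin 2 → ℤ}
    (h : Relation.ReflTransGen (fun u v => latAdj u v ∧ u ∈ A ∧ v ∈ A) x y)
    (hx : x ∈ A) :
    ∀ t : ℤ, (x j ≤ t ∧ t ≤ y j) ∨ (y j ≤ t ∧ t ≤ x j) → ∃ z ∈ A, z j = t := by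
  induction h with
  | refl => intro t ht; exact ⟨x, hx, by omega⟩
  | @tail b c hpath hstep ih =>
    intro t ht
    have hbc : |b j - c j| ≤ 1 := by
      have h1 : (∑ i, |b i - c i|) = 1 := hstep.1
      calc |b j - c j| ≤ ∑ i, |b i - c i| :=
        Finset.single_le_sum (f := fun i => |b i - c i|) (fun i _ => abs_nonneg _) (Finset.mem_univ j)
      _ = 1 := h1
    rw [abs_le] at hbc
    by_cases hcase : (x j ≤ t ∧ t ≤ b j) ∨ (b j ≤ t ∧ t ≤ x j)
    · exact ih t hcase
    · exact ⟨c, hstep.2.2, by omega⟩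




/-- The coordinate in which an edge points. -/
def edgeDir (e : (Fin 2 → ℤ) × (Fin 2 → ℤ)) : Fin 2 := if e.2 0 ≠ e.1 0 then 0 else 1

/-- Push an edge in its own direction to the boundary of the box `[a,b]`. -/
def pushEdge (a b : Fin 2 → ℤ) (e : (Fin 2 → ℤ) × (Fin 2 → ℤ)) :
    (Fin 2 → ℤ) × (Fin 2 → ℤ) :=
  (Function.update e.1 (edgeDir e)
      (if e.2 (edgeDir e) - e.1 (edgeDir e) = 1 then b (edgeDir e) else a (edgeDir e)),
   Function.update e.1 (edgeDir e)
      ((if e.2 (edgeDir e) - e.1 (edgeDir e) = 1 then b (edgeDir e) else a (edgeDir e)) +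
        (e.2 (edgeDir e) - e.1 (edgeDir e))))

lemma edgeDir_eq {x : Fin 2 → ℤ} {i : Fin 2} {s : ℤ} (hs : s = 1 ∨ s = -1) :
    edgeDir (x, Function.update x i (x i + s)) = i := by
  fin_cases i <;> rcases hs with rfl | rfl <;>
    simp [edgeDir, Function.update] <;> omega

lemma pushEdge_eq (a b : Fin 2 → ℤ) {x : Fin 2 → ℤ} {i : Fin 2} {s : ℤ}
    (hs : s = 1 ∨ s = -1) :
    pushEdge a b (x, Function.update x i (x i + s)) =
      (Function.update x i (if s = 1 then b i else a i),
       Function.update x i ((if s = 1 then b i else a i) + s)) := by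
  have hd : edgeDir (x, Function.update x i (x i + s)) = i := edgeDir_eq hs
  unfold pushEdge
  dsimp only
  simp only [hd, Function.update_self]
  ring_nf

lemma outerEB_finite {A : Set (Fin 2 → ℤ)} (hfin : A.Finite) : (outerEB A).Finite := by
  have hsub : outerEB A ⊆
      ((fun x => (x, Function.update x 0 (x 0 + 1))) '' A ∪
        (fun x => (x, Function.update x 0 (x 0 + -1))) '' A) ∪
      ((fun x => (x, Function.update x 1 (x 1 + 1))) '' A ∪
        (fun x => (x, Function.update x 1 (x 1 + -1))) '' A) := by
    rintro ⟨u, w⟩ ⟨h1, _, h3⟩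
    dsimp only at h1 h3 ⊢
    obtain ⟨i, s, hs, rfl⟩ := latAdj_iff.mp h3
    fin_cases i <;> rcases hs with rfl | rfl
    · exact Or.inl (Or.inl ⟨u, h1, rfl⟩)
    · exact Or.inl (Or.inr ⟨u, h1, rfl⟩)
    · exact Or.inr (Or.inl ⟨u, h1, rfl⟩)
    · exact Or.inr (Or.inr ⟨u, h1, rfl⟩)
  exact Set.Finite.subset (((hfin.image _).union (hfin.image _)).union
    ((hfin.image _).union (hfin.image _))) hsub

lemma fin2_other {i j : Fin 2} (h : j ≠ i) : j = (if i = 0 then 1 else 0) := by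
  fin_cases i <;> fin_cases j <;> simp_all

/-- If `R` is the smallest axis-aligned rectangle in `ℤ²` containing the finite
connected set `A`, then `|∂*_e R| ≤ |∂*_e A|`. -/
theorem stmt_4 (A R : Set (Fin 2 → ℤ)) (hfin : A.Finite) (hne : A.Nonempty)
    (hconn : ConnSet A) (hbox : IsBox R) (hAR : A ⊆ R)
    (hmin : ∀ R' : Set (Fin 2 → ℤ), IsBox R' → A ⊆ R' → R ⊆ R') :
    (outerEB R).ncard ≤ (outerEB A).ncard := by
  obtain ⟨a, b, rfl⟩ := hbox
  have hab : ∀ i, a i ≤ b i := by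
    obtain ⟨x, hx⟩ := hne
    intro i
    have h := hAR hx i
    omega
  -- the coordinates `a i` and `b i` are attained on `A`
  have hatta : ∀ i : Fin 2, ∃ x ∈ A, x i = a i := by
    intro i
    by_contra hc
    push_neg at hc
    have hsub : A ⊆ {x : Fin 2 → ℤ | ∀ j, Function.update a i (a i + 1) j ≤ x j ∧ x j ≤ b j} := by
      intro x hx j
      have h1 := hAR hx j
      by_cases hj : j = i
      · subst hj
        have h2 := hc x hx
        have h3 := hAR hx j
        rw [Function.update_self]
        omega
      · rw [Function.update_of_ne hj]; exact h1
    have hsub2 := hmin _ ⟨_, _, rfl⟩ hsub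
    have ha : a ∈ {x : Fin 2 → ℤ | ∀ j, a j ≤ x j ∧ x j ≤ b j} := fun j => ⟨le_refl _, hab j⟩
    have := (hsub2 ha i).1
    rw [Function.update_self] at this
    omega
  have hattb : ∀ i : Fin 2, ∃ x ∈ A, x i = b i := by
    intro i
    by_contra hc
    push_neg at hc
    have hsub : A ⊆ {x : Fin 2 → ℤ | ∀ j, a j ≤ x j ∧ x j ≤ Function.update b i (b i - 1) j} := by
      intro x hx j
      have h1 := hAR hx j
      by_cases hj : j = i
      · subst hj
        have h2 := hc x hx
        rw [Function.update_self]
        omega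
      · rw [Function.update_of_ne hj]; exact h1
    have hsub2 := hmin _ ⟨_, _, rfl⟩ hsub
    have hbmem : b ∈ {x : Fin 2 → ℤ | ∀ j, a j ≤ x j ∧ x j ≤ b j} := fun j => ⟨hab j, le_refl _⟩
    have := (hsub2 hbmem i).2
    rw [Function.update_self] at this
    omega
  -- every "row" of the box meets `A`
  have hrow : ∀ j : Fin 2, ∀ t : ℤ, a j ≤ t → t ≤ b j → ∃ x ∈ A, x j = t := by
    intro j t h1 h2
    obtain ⟨p, hp, hpj⟩ := hatta j
    obtain ⟨q, hq, hqj⟩ := hattb j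
    exact ivt (hconn p hp q hq) hp t (Or.inl ⟨by omega, by omega⟩)
  -- the pushing map is onto the outer edge boundary of the box
  have hsub : outerEB {x : Fin 2 → ℤ | ∀ i, a i ≤ x i ∧ x i ≤ b i} ⊆
      pushEdge a b '' outerEB A := by
    rintro ⟨u, w⟩ ⟨huR, hwE, hadj⟩
    dsimp only at huR hwE hadj ⊢
    obtain ⟨i, s, hs, rfl⟩ := latAdj_iff.mp hadj
    have huR' : ∀ k, a k ≤ u k ∧ u k ≤ b k := huR
    have hwnR : Function.update u i (u i + s) ∉
        {x : Fin 2 → ℤ | ∀ k, a k ≤ x k ∧ x k ≤ b k} := hwE.1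
    have hui : u i = (if s = 1 then b i else a i) := by
      by_contra hcon
      apply hwnR
      intro k
      by_cases hk : k = i
      · subst hk
        rw [Function.update_self]
        have h1 := huR' k
        rcases hs with rfl | rfl <;> simp at hcon <;> omega
      · rw [Function.update_of_ne hk]; exact huR' k
    set j : Fin 2 := if i = 0 then 1 else 0 with hjdef
    have hij : j ≠ i := by fin_cases i <;> simp [hjdef]
    obtain ⟨x, hxA, hxj⟩ := hrow j (u j) (huR' j).1 (huR' j).2
    have hSfin : {z | z ∈ A ∧ z j = u j}.Finite := hfin.subset (fun z hz => hz.1)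
    obtain ⟨m, hm, hmax⟩ :=
      Set.Finite.exists_maximalFor (fun z => s * z i) _ hSfin ⟨x, hxA, hxj⟩
    have hmax' : ∀ z ∈ A, z j = u j → s * z i ≤ s * m i := by
      intro z hz hzj
      rcases le_total (s * z i) (s * m i) with h | h
      · exact h
      · exact hmax ⟨hz, hzj⟩ h
    -- the ray from `m` in direction `(i, s)` misses `A`
    have hray : ∀ n : ℕ,
        Function.update (Function.update m i (m i + s)) i
          ((Function.update m i (m i + s)) i + s * n) ∉ A := by
      intro n hmem
      have hzj : (Function.update (Function.update m i (m i + s)) i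
          ((Function.update m i (m i + s)) i + s * n)) j = u j := by
        rw [Function.update_of_ne hij, Function.update_of_ne hij]
        exact hm.2
      have hle := hmax' _ hmem hzj
      rw [Function.update_self, Function.update_self] at hle
      rcases hs with rfl | rfl <;> omega
    have hedge : (m, Function.update m i (m i + s)) ∈ outerEB A :=
      ⟨hm.1, ray_ext hs hray, latAdj_update hs⟩
    refine ⟨(m, Function.update m i (m i + s)), hedge, ?_⟩
    rw [pushEdge_eq a b hs]
    have hmu : Function.update m i (if s = 1 then b i else a i) = u := by
      funext k
      by_cases hk : k = i
      · subst hk; rw [Function.update_self, ← hui]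
      · rw [Function.update_of_ne hk]
        have hkj : k = j := by rw [hjdef]; exact fin2_other hk
        rw [hkj, hm.2]
    have hm2 : Function.update m i ((if s = 1 then b i else a i) + s) =
        Function.update u i (u i + s) := by
      conv_rhs => rw [← hmu, Function.update_self, Function.update_idem]
    rw [Prod.mk.injEq]
    exact ⟨hmu, hm2⟩
  calc (outerEB {x : Fin 2 → ℤ | ∀ i, a i ≤ x i ∧ x i ≤ b i}).ncard
      ≤ ((pushEdge a b) '' outerEB A).ncard :=
        Set.ncard_le_ncard hsub ((outerEB_finite hfin).image _)
    _ ≤ (outerEB A).ncard := Set.ncard_image_le (outerEB_finite hfin)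
end

section
/- Let A be a finite connected subset of ℤ² and let R be the smallest axis-aligned lattice rectangle containing A. Then |∂*R| ≤ 3|∂*A|, where ∂* denotes the outer vertex boundary. -/
namespace S5

abbrev Pt := Fin 2 → ℤ

def ev (p : Fin 2 × Bool) : Pt := fun j => if j = p.1 then (if p.2 then (1:ℤ) else -1) else 0

lemma ev_bounds (p : Fin 2 × Bool) (i : Fin 2) : -1 ≤ ev p i ∧ ev p i ≤ 1 := by
  unfold ev
  split <;> [skip; norm_num] <;> split <;> norm_num

lemma ev_other (p : Fin 2 × Bool) (j : Fin 2) (h : j ≠ p.1) : ev p j = 0 := by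
  simp [ev, h]

lemma ev_self_ne (p : Fin 2 × Bool) : ev p p.1 ≠ 0 := by
  rcases p with ⟨i, s⟩ <;> cases s <;> simp [ev]

lemma latAdj_add_ev (x : Pt) (p : Fin 2 × Bool) : latAdj x (x + ev p) := by
  unfold latAdj
  rw [Fin.sum_univ_two]
  rcases p with ⟨i, s⟩
  fin_cases i <;> cases s <;> simp [ev] <;> norm_num

lemma latAdj_iff (x y : Pt) : latAdj x y ↔ ∃ p, y = x + ev p := by
  constructor
  · intro h
    unfold latAdj at h
    rw [Fin.sum_univ_two] at h
    have h0 := abs_nonneg (x 0 - y 0); have h1 := abs_nonneg (x 1 - y 1)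
    have hle0 : |x 0 - y 0| ≤ 1 := by omega
    have hle1 : |x 1 - y 1| ≤ 1 := by omega
    have e0 := abs_le.mp hle0
    have e1 := abs_le.mp hle1
    have habs : (x 0 - y 0 = 0 ∧ (x 1 - y 1 = 1 ∨ x 1 - y 1 = -1)) ∨
        ((x 0 - y 0 = 1 ∨ x 0 - y 0 = -1) ∧ x 1 - y 1 = 0) := by
      rcases abs_cases (x 0 - y 0) with ⟨ha, _⟩ | ⟨ha, _⟩ <;>
      rcases abs_cases (x 1 - y 1) with ⟨hb, _⟩ | ⟨hb, _⟩ <;> omega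
    rcases habs with ⟨ha, hb | hb⟩ | ⟨ha | ha, hb⟩
    · exact ⟨(1, false), by funext j; fin_cases j <;> simp [ev] <;> omega⟩
    · exact ⟨(1, true), by funext j; fin_cases j <;> simp [ev] <;> omega⟩
    · exact ⟨(0, false), by funext j; fin_cases j <;> simp [ev] <;> omega⟩
    · exact ⟨(0, true), by funext j; fin_cases j <;> simp [ev] <;> omega⟩
  · rintro ⟨p, rfl⟩; exact latAdj_add_ev x p

lemma latAdj_abs_le {x y : Pt} (h : latAdj x y) (j : Fin 2) : |x j - y j| ≤ 1 := by
  unfold latAdj at h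
  rw [Fin.sum_univ_two] at h
  have h0 := abs_nonneg (x 0 - y 0); have h1 := abs_nonneg (x 1 - y 1)
  have hj : j = 0 ∨ j = 1 := by omega
  rcases hj with rfl | rfl <;> omega

lemma ray_extComp (S : Set Pt) (y : Pt) (p : Fin 2 × Bool)
    (h : ∀ t : ℕ, y + (t : ℤ) • ev p ∉ S) : y ∈ extComp S := by
  refine ⟨by simpa using h 0, ?_⟩
  refine Set.infinite_of_injective_forall_mem (f := fun t : ℕ => y + (t : ℤ) • ev p) ?_ ?_
  · intro t t' hEq
    have h2 := congrFun hEq p.1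
    simp only [Pi.add_apply, Pi.smul_apply, smul_eq_mul, add_right_inj] at h2
    have := ev_self_ne p
    rcases p with ⟨i, s⟩ <;> cases s <;> simp [ev] at h2 ⊢ <;> omega
  · intro t
    induction t with
    | zero => simpa using Relation.ReflTransGen.refl
    | succ n ih =>
      refine Relation.ReflTransGen.tail ih ?_
      have heq : y + ((n + 1 : ℕ) : ℤ) • ev p = (y + (n : ℤ) • ev p) + ev p := by
        push_cast
        rw [add_smul, one_smul, add_assoc]
      refine ⟨?_, h n, h (n+1)⟩
      have h3 := latAdj_add_ev (y + (n : ℤ) • ev p) p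
      rwa [← heq] at h3

end S5


/-- If `R` is the smallest axis-aligned rectangle in `ℤ²` containing the finite
connected set `A`, then `|∂*R| ≤ 3 |∂*A|`. -/
theorem stmt_5 (A R : Set (Fin 2 → ℤ)) (hfin : A.Finite) (hne : A.Nonempty)
    (hconn : ConnSet A) (hbox : IsBox R) (hAR : A ⊆ R)
    (hmin : ∀ R' : Set (Fin 2 → ℤ), IsBox R' → A ⊆ R' → R ⊆ R') :
    (outerVB R).ncard ≤ 3 * (outerVB A).ncard := by
  classical
  obtain ⟨F, hF⟩ : ∃ F : Finset S5.Pt, ↑F = A := ⟨hfin.toFinset, hfin.coe_toFinset⟩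
  have hmemF : ∀ x : S5.Pt, x ∈ F ↔ x ∈ A := fun x => by rw [← hF]; rfl
  have hFne : F.Nonempty := by
    obtain ⟨x, hx⟩ := hne; exact ⟨x, (hmemF x).mpr hx⟩
  set a : S5.Pt := fun i => (F.image fun x => x i).min' (hFne.image _) with ha
  set b : S5.Pt := fun i => (F.image fun x => x i).max' (hFne.image _) with hb
  have hax : ∀ i, ∃ x ∈ A, x i = a i := by
    intro i
    have := (F.image fun x => x i).min'_mem (hFne.image _)
    rw [Finset.mem_image] at this
    obtain ⟨x, hx, hxi⟩ := this
    exact ⟨x, (hmemF x).mp hx, hxi⟩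
  have hbx : ∀ i, ∃ x ∈ A, x i = b i := by
    intro i
    have := (F.image fun x => x i).max'_mem (hFne.image _)
    rw [Finset.mem_image] at this
    obtain ⟨x, hx, hxi⟩ := this
    exact ⟨x, (hmemF x).mp hx, hxi⟩
  have hA_ab : ∀ x ∈ A, ∀ i, a i ≤ x i ∧ x i ≤ b i := by
    intro x hx i
    constructor
    · exact Finset.min'_le _ _ (Finset.mem_image_of_mem _ ((hmemF x).mpr hx))
    · exact Finset.le_max' (F.image fun y => y i) (x i)
        (Finset.mem_image_of_mem _ ((hmemF x).mpr hx))
  have hRBox : R ⊆ {x : S5.Pt | ∀ i, a i ≤ x i ∧ x i ≤ b i} :=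
    hmin _ ⟨a, b, rfl⟩ (fun x hx => hA_ab x hx)
  have hBoxR : {x : S5.Pt | ∀ i, a i ≤ x i ∧ x i ≤ b i} ⊆ R := by
    obtain ⟨a', b', hR'⟩ := hbox
    intro x hx
    rw [hR']
    intro i
    obtain ⟨p, hp, hpi⟩ := hax i
    obtain ⟨q, hq, hqi⟩ := hbx i
    have h1 := hAR hp; have h2 := hAR hq
    rw [hR'] at h1 h2
    have h3 := (h1 i).1
    have h4 := (h2 i).2
    have h5 := hx i
    omega
  have hVBfin : (outerVB A).Finite := hfin.subset (fun x hx => hx.1)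
  -- intermediate value property along the connected set
  have hivt : ∀ j : Fin 2, ∀ c : ℤ, a j ≤ c → c ≤ b j → ∃ x ∈ A, x j = c := by
    intro j c h1 h2
    obtain ⟨p, hp, hpj⟩ := hax j
    obtain ⟨q, hq, hqj⟩ := hbx j
    have key : ∀ z : S5.Pt,
        Relation.ReflTransGen (fun u v => latAdj u v ∧ u ∈ A ∧ v ∈ A) p z →
        ∀ c : ℤ, p j ≤ c → c ≤ z j → ∃ x ∈ A, x j = c := by
      intro z hz
      induction hz with
      | refl => intro c hc1 hc2; exact ⟨p, hp, by omega⟩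
      | @tail u v hpu hr ih =>
        intro c hc1 hc2
        by_cases hcu : c ≤ u j
        · exact ih c hc1 hcu
        · have habs := abs_le.mp (S5.latAdj_abs_le hr.1 j)
          exact ⟨v, hr.2.2, by omega⟩
    exact key q (hconn p hp q hq) c (by omega) (by omega)
  by_cases hab : a = b
  · -- A is a singleton
    have hAa : ∀ x ∈ A, x = a := by
      intro x hx
      funext i
      have := hA_ab x hx i
      rw [hab] at this ⊢
      omega
    obtain ⟨x0, hx0⟩ := hne
    have hx0a : x0 = a := hAa x0 hx0
    have haA : a ∈ A := hx0a ▸ hx0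
    have hub : (outerVB R).ncard ≤ 1 := by
      have hsub : outerVB R ⊆ {a} := by
        intro x hx
        have h1 := hRBox hx.1
        have : x = a := by
          funext i
          have h3 := congrFun hab i
          have := h1 i
          omega
        simp [this]
      simpa using Set.ncard_le_ncard hsub (Set.finite_singleton a)
    have hmem : a ∈ outerVB A := by
      refine ⟨haA, a + S5.ev (1, true), ?_, S5.latAdj_add_ev a (1, true)⟩
      apply S5.ray_extComp _ _ (1, true)
      intro t hmem
      have := hAa _ hmem
      have h2 := congrFun this 1
      simp only [Pi.add_apply, Pi.smul_apply, smul_eq_mul, S5.ev] at h2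
      norm_num at h2
      omega
    have hlb : 1 ≤ (outerVB A).ncard := by
      have h9 := Set.ncard_le_ncard (Set.singleton_subset_iff.mpr hmem) hVBfin
      rwa [Set.ncard_singleton] at h9
    calc (outerVB R).ncard ≤ 1 := hub
      _ ≤ 3 * (outerVB A).ncard := by
        have h9 : 1 ≤ 3 * (outerVB A).ncard := le_trans hlb (Nat.le_mul_of_pos_left _ (by norm_num))
        exact h9
  · -- main case : A has at least two points
    have htwo : ∀ x ∈ A, ∃ y ∈ A, y ≠ x := by
      have hi2 : ∃ i, a i ≠ b i := by
        by_contra h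
        push_neg at h
        exact hab (funext h)
      obtain ⟨i, hi⟩ := hi2
      obtain ⟨p, hp, hpi⟩ := hax i
      obtain ⟨q, hq, hqi⟩ := hbx i
      have hpq : p ≠ q := by
        intro h
        apply hi
        rw [← hpi, ← hqi, h]
      intro x hx
      by_cases hxp : x = p
      · exact ⟨q, hq, fun h => hpq (hxp ▸ h).symm⟩
      · exact ⟨p, hp, fun h => hxp h.symm⟩
    have hnbrE : ∀ x : S5.Pt, ∃ p : Fin 2 × Bool, x ∈ A → x + S5.ev p ∈ A := by
      intro x
      by_cases hx : x ∈ A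
      · obtain ⟨y, hy, hyx⟩ := htwo x hx
        rcases (hconn x hx y hy).cases_head with heq | ⟨z, hr, _⟩
        · exact absurd heq.symm hyx
        · obtain ⟨p, hp⟩ := (S5.latAdj_iff x z).mp hr.1
          exact ⟨p, fun _ => hp ▸ hr.2.2⟩
      · exact ⟨(0, true), fun h => absurd h hx⟩
    choose nbr hnbr using hnbrE
    -- the "other index" map
    set oi : Fin 2 → Fin 2 := fun i => if i = 0 then 1 else 0 with hoi
    have hoine : ∀ i, oi i ≠ i := by
      intro i
      have : i = 0 ∨ i = 1 := by omega
      rcases this with rfl | rfl <;> simp [hoi]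
    -- extreme points with outgoing rays
    have hextE : ∀ t : (Fin 2 × Bool) × ℤ, ∃ x : S5.Pt,
        (a (oi t.1.1) ≤ t.2 ∧ t.2 ≤ b (oi t.1.1)) →
        (x ∈ A ∧ x (oi t.1.1) = t.2 ∧
          ∀ u : ℕ, (x + S5.ev t.1) + (u : ℤ) • S5.ev t.1 ∉ A) := by
      rintro ⟨⟨i, s⟩, c⟩
      by_cases hc : a (oi i) ≤ c ∧ c ≤ b (oi i)
      · obtain ⟨x0, hx0, hx0c⟩ := hivt (oi i) c hc.1 hc.2
        set C := F.filter (fun z => z (oi i) = c) with hC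
        have hCne : C.Nonempty := ⟨x0, by
          rw [hC, Finset.mem_filter]
          exact ⟨(hmemF x0).mpr hx0, hx0c⟩⟩
        have hextreme : ∃ m ∈ C, ∀ z ∈ C,
            (if s then z i ≤ m i else m i ≤ z i) := by
          cases s
          · obtain ⟨m, hm, hmle⟩ := C.exists_min_image (fun z => z i) hCne
            exact ⟨m, hm, fun z hz => by simpa using hmle z hz⟩
          · obtain ⟨m, hm, hmle⟩ := C.exists_max_image (fun z => z i) hCne
            exact ⟨m, hm, fun z hz => by simpa using hmle z hz⟩
        obtain ⟨m, hm, hmle⟩ := hextreme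
        rw [hC, Finset.mem_filter] at hm
        refine ⟨m, fun _ => ⟨(hmemF m).mp hm.1, hm.2, ?_⟩⟩
        intro u hmem
        have hzoi : (m + S5.ev (i, s) + (u : ℤ) • S5.ev (i, s)) (oi i) = c := by
          have h1 : S5.ev (i, s) (oi i) = 0 := S5.ev_other _ _ (hoine i)
          simp [h1, hm.2]
        have hzC : (m + S5.ev (i, s) + (u : ℤ) • S5.ev (i, s)) ∈ C := by
          rw [hC, Finset.mem_filter]
          exact ⟨(hmemF _).mpr hmem, hzoi⟩
        have h2 := hmle _ hzC
        have h1 : S5.ev (i, s) i = (if s then (1 : ℤ) else -1) := by simp [S5.ev]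
        cases s <;> simp [h1] at h2 <;> omega
      · exact ⟨a, fun h => absurd h hc⟩
    choose ext hext using hextE
    -- the finite index set
    set T : Finset ((Fin 2 × Bool) × ℤ) :=
      ((({0} : Finset (Fin 2)) ×ˢ (Finset.univ : Finset Bool)) ×ˢ Finset.Icc (a 1) (b 1)) ∪
      ((({1} : Finset (Fin 2)) ×ˢ (Finset.univ : Finset Bool)) ×ˢ Finset.Icc (a 0) (b 0))
      with hT
    have hTmem : ∀ t ∈ T, a (oi t.1.1) ≤ t.2 ∧ t.2 ≤ b (oi t.1.1) := by
      intro t ht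
      rw [hT, Finset.mem_union, Finset.mem_product, Finset.mem_product,
        Finset.mem_product, Finset.mem_product] at ht
      rcases ht with ⟨⟨h1, _⟩, h2⟩ | ⟨⟨h1, _⟩, h2⟩
      · rw [Finset.mem_singleton] at h1
        rw [Finset.mem_Icc] at h2
        rw [h1]
        simpa [hoi] using h2
      · rw [Finset.mem_singleton] at h1
        rw [Finset.mem_Icc] at h2
        rw [h1]
        simpa [hoi] using h2
    have hTcard : T.card = 2 * (Finset.Icc (a 1) (b 1)).card
        + 2 * (Finset.Icc (a 0) (b 0)).card := by
      rw [hT, Finset.card_union_of_disjoint]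
      · simp [Finset.card_product]
      · rw [Finset.disjoint_left]
        rintro ⟨⟨i, s⟩, c⟩ h1 h2
        rw [Finset.mem_product, Finset.mem_product, Finset.mem_singleton] at h1 h2
        have := h1.1.1
        have := h2.1.1
        exact absurd (h1.1.1.symm.trans h2.1.1) (by decide)
    -- the target finite set
    set B : Finset S5.Pt := hVBfin.toFinset with hB
    set target : Finset (S5.Pt × (Fin 2 × Bool)) :=
      B.biUnion (fun x => ({x} : Finset S5.Pt) ×ˢ
        ((Finset.univ : Finset (Fin 2 × Bool)).erase (nbr x))) with htarget
    have htargetcard : target.card = 3 * B.card := by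
      rw [htarget, Finset.card_biUnion]
      · rw [Finset.sum_congr rfl (fun x _ => ?_), Finset.sum_const, smul_eq_mul, mul_comm]
        rw [Finset.card_product, Finset.card_singleton, one_mul,
          Finset.card_erase_of_mem (Finset.mem_univ _)]
        simp
      · intro x hx y hy hxy
        rw [Function.onFun, Finset.disjoint_left]
        rintro ⟨z, p⟩ h1 h2
        rw [Finset.mem_product, Finset.mem_singleton] at h1 h2
        exact hxy (h1.1 ▸ h2.1 ▸ rfl)
    -- the injection
    have hmap : ∀ t ∈ T, (ext t, t.1) ∈ target := by
      intro t ht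
      obtain ⟨hx1, hx2, hx3⟩ := hext t (hTmem t ht)
      have hxVB : ext t ∈ outerVB A := by
        refine ⟨hx1, ext t + S5.ev t.1, ?_, S5.latAdj_add_ev _ t.1⟩
        exact S5.ray_extComp A _ t.1 hx3
      have hne' : t.1 ≠ nbr (ext t) := by
        intro h
        have h1 := hnbr (ext t) hx1
        rw [← h] at h1
        have h2 := hx3 0
        simp at h2
        exact h2 h1
      rw [htarget, Finset.mem_biUnion]
      refine ⟨ext t, hVBfin.mem_toFinset.mpr hxVB, ?_⟩
      rw [Finset.mem_product, Finset.mem_singleton]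
      exact ⟨rfl, Finset.mem_erase.mpr ⟨hne', Finset.mem_univ _⟩⟩
    have hinj : Set.InjOn (fun t => (ext t, t.1)) T := by
      intro t ht t' ht' heq
      simp only [Prod.mk.injEq] at heq
      obtain ⟨he, h1⟩ := heq
      have hs2 := (hext t (hTmem t ht)).2.1
      have hs2' := (hext t' (hTmem t' ht')).2.1
      have : t.2 = t'.2 := by
        rw [← hs2, ← hs2', he, h1]
      exact Prod.ext h1 this
    have hTle : T.card ≤ target.card :=
      Finset.card_le_card_of_injOn _ hmap hinj
    -- upper bound for the rectangle boundary
    have hub : (outerVB R).ncard ≤ 2 * (Finset.Icc (a 1) (b 1)).card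
        + 2 * (Finset.Icc (a 0) (b 0)).card := by
      set row : ℤ → Set S5.Pt := fun t =>
        (fun c : ℤ => (fun j : Fin 2 => if j = 0 then c else t)) '' Set.Icc (a 0) (b 0) with hrow
      set col : ℤ → Set S5.Pt := fun t =>
        (fun c : ℤ => (fun j : Fin 2 => if j = 1 then c else t)) '' Set.Icc (a 1) (b 1) with hcol
      have hsub : outerVB R ⊆ (row (a 1) ∪ row (b 1)) ∪ (col (a 0) ∪ col (b 0)) := by
        rintro x ⟨hxR, y, hyc, hadj⟩
        have hxBox := hRBox hxR
        have hyBox : ¬ (∀ i, a i ≤ y i ∧ y i ≤ b i) := fun h => hyc.1 (hBoxR h)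
        push_neg at hyBox
        obtain ⟨i, hi⟩ := hyBox
        obtain ⟨p, hy⟩ := (S5.latAdj_iff x y).mp hadj
        have hyi : y i = x i + S5.ev p i := by rw [hy]; simp
        have hevb := S5.ev_bounds p i
        have hxi := hxBox i
        have hcases : x i = a i ∨ x i = b i := by
          by_cases h : a i ≤ y i
          · have := hi h
            omega
          · omega
        have hrmem : ∀ t : ℤ, x 1 = t → x ∈ row t := by
          intro t hx1
          refine ⟨x 0, Set.mem_Icc.mpr (hxBox 0), ?_⟩
          funext j
          have : j = 0 ∨ j = 1 := by omega
          rcases this with rfl | rfl <;> simp [hx1]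
        have hcmem : ∀ t : ℤ, x 0 = t → x ∈ col t := by
          intro t hx0
          refine ⟨x 1, Set.mem_Icc.mpr (hxBox 1), ?_⟩
          funext j
          have : j = 0 ∨ j = 1 := by omega
          rcases this with rfl | rfl <;> simp [hx0]
        have hi01 : i = 0 ∨ i = 1 := by omega
        rcases hi01 with rfl | rfl
        · rcases hcases with h | h
          · exact Or.inr (Or.inl (hcmem _ h))
          · exact Or.inr (Or.inr (hcmem _ h))
        · rcases hcases with h | h
          · exact Or.inl (Or.inl (hrmem _ h))
          · exact Or.inl (Or.inr (hrmem _ h))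
      have hrowfin : ∀ t, (row t).Finite := fun t => (Set.finite_Icc _ _).image _
      have hcolfin : ∀ t, (col t).Finite := fun t => (Set.finite_Icc _ _).image _
      have hrowcard : ∀ t, (row t).ncard ≤ (Finset.Icc (a 0) (b 0)).card := by
        intro t
        have h1 : (row t).ncard ≤ (Set.Icc (a 0) (b 0)).ncard :=
          Set.ncard_image_le (Set.finite_Icc _ _)
        rwa [← Finset.coe_Icc, Set.ncard_coe_finset] at h1
      have hcolcard : ∀ t, (col t).ncard ≤ (Finset.Icc (a 1) (b 1)).card := by
        intro t
        have h1 : (col t).ncard ≤ (Set.Icc (a 1) (b 1)).ncard :=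
          Set.ncard_image_le (Set.finite_Icc _ _)
        rwa [← Finset.coe_Icc, Set.ncard_coe_finset] at h1
      have hPfin : ((row (a 1) ∪ row (b 1)) ∪ (col (a 0) ∪ col (b 0))).Finite :=
        (((hrowfin _).union (hrowfin _)).union ((hcolfin _).union (hcolfin _)))
      calc (outerVB R).ncard ≤ ((row (a 1) ∪ row (b 1)) ∪ (col (a 0) ∪ col (b 0))).ncard :=
            Set.ncard_le_ncard hsub hPfin
        _ ≤ (row (a 1) ∪ row (b 1)).ncard + (col (a 0) ∪ col (b 0)).ncard :=
            Set.ncard_union_le _ _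
        _ ≤ ((row (a 1)).ncard + (row (b 1)).ncard) + ((col (a 0)).ncard + (col (b 0)).ncard) :=
            add_le_add (Set.ncard_union_le _ _) (Set.ncard_union_le _ _)
        _ ≤ 2 * (Finset.Icc (a 1) (b 1)).card + 2 * (Finset.Icc (a 0) (b 0)).card := by
            have h1 := hrowcard (a 1); have h2 := hrowcard (b 1)
            have h3 := hcolcard (a 0); have h4 := hcolcard (b 0)
            omega
    have hfinal : (outerVB A).ncard = B.card := Set.ncard_eq_toFinset_card _ hVBfin
    omega
end

section
/- Let (Y_n) be a discrete-time reversible Markov chain on a finite state space with reversible measure μ̃. Then for all states r, s and all n ≥ 1, P_r(Y_n = s) ≤ 2·√(μ̃(s)/μ̃(r))·exp(-(d(r,s))²/(2n)), where d(r,s) is the graph distance in the transition graph of the chain (Varopoulos–Carne bound), and consequently if d(r,s) ≥ D then P_r(∃ k ≤ n : Y_k = s) ≤ 2n·√(μ̃(s)/μ̃(r))·exp(-D²/(2n)). -/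
open MeasureTheory

section VaropoulosCarneAux

open Finset Polynomial

namespace VC19

noncomputable def a : ℕ → ℤ → ℝ
  | 0, k => if k = 0 then 1 else 0
  | (n+1), k => (a n (k-1) + a n (k+1)) / 2

lemma a_nonneg : ∀ n k, 0 ≤ a n k
  | 0, k => by unfold a; positivity
  | (n+1), k => by
    unfold a
    have h1 := a_nonneg n (k-1); have h2 := a_nonneg n (k+1); positivity

lemma a_eq_zero : ∀ (n : ℕ) (k : ℤ), (n : ℤ) < |k| → a n k = 0
  | 0, k, h => by
    unfold a
    have : k ≠ 0 := by intro h0; simp [h0] at h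
    simp [this]
  | (n+1), k, h => by
    have e1 : (n : ℤ) < |k - 1| := by
      have := abs_sub_abs_le_abs_sub k 1; push_cast at h ⊢; simp at this; omega
    have e2 : (n : ℤ) < |k + 1| := by
      have := abs_sub_abs_le_abs_sub k (-1); push_cast at h ⊢; simp at this; omega
    unfold a
    rw [a_eq_zero n (k-1) e1, a_eq_zero n (k+1) e2]
    norm_num

lemma sum_shift {M : Type*} [AddCommMonoid M] (f : ℤ → M) (c lo hi : ℤ) :
    ∑ k ∈ Finset.Icc lo hi, f (k + c) = ∑ k ∈ Finset.Icc (lo + c) (hi + c), f k := by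
  rw [← Finset.map_add_right_Icc, Finset.sum_map]
  rfl

lemma sum_w_smul_shift {M : Type*} [AddCommMonoid M] [Module ℝ M]
    (w : ℤ → ℝ) (n : ℕ) (hw : ∀ k : ℤ, (n : ℤ) < |k| → w k = 0)
    (c : ℤ) (hc : |c| ≤ 1) (F : ℤ → M) :
    ∑ k ∈ Finset.Icc (-(n+1:ℤ)) ((n:ℤ)+1), w (k+c) • F k
      = ∑ j ∈ Finset.Icc (-(n:ℤ)) (n:ℤ), w j • F (j - c) := by
  have h := sum_shift (fun j => w j • F (j - c)) c (-(n+1:ℤ)) ((n:ℤ)+1)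
  simp only [add_sub_cancel_right] at h
  rw [h]
  symm
  apply Finset.sum_subset
  · intro x hx
    simp only [Finset.mem_Icc] at hx ⊢
    rw [abs_le] at hc; omega
  · intro x hx hx'
    have : (n : ℤ) < |x| := by
      simp only [Finset.mem_Icc] at hx'
      rw [lt_abs]; omega
    rw [hw x this, zero_smul]

lemma sum_a_smul_shift {M : Type*} [AddCommMonoid M] [Module ℝ M]
    (n : ℕ) (c : ℤ) (hc : |c| ≤ 1) (F : ℤ → M) :
    ∑ k ∈ Finset.Icc (-(n+1:ℤ)) ((n:ℤ)+1), a n (k+c) • F k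
      = ∑ j ∈ Finset.Icc (-(n:ℤ)) (n:ℤ), a n j • F (j - c) :=
  sum_w_smul_shift (a n) n (a_eq_zero n) c hc F

lemma a_moment (t : ℝ) : ∀ n : ℕ,
    ∑ k ∈ Finset.Icc (-(n:ℤ)) (n:ℤ), a n k * Real.exp (t * k) = Real.cosh t ^ n
  | 0 => by simp [a]
  | (n+1) => by
    have a_succ : ∀ k : ℤ, a (n+1) k = (a n (k-1) + a n (k+1)) / 2 := fun k => rfl
    have shift1 := sum_a_smul_shift (M := ℝ) n (-1) (by norm_num)
      (fun k => Real.exp (t * k))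
    have shift2 := sum_a_smul_shift (M := ℝ) n 1 (by norm_num)
      (fun k => Real.exp (t * k))
    simp only [smul_eq_mul] at shift1 shift2
    push_cast at shift1 shift2
    simp only [sub_neg_eq_add] at shift1
    have inner1 : ∑ j ∈ Finset.Icc (-(n:ℤ)) (n:ℤ), a n j * Real.exp (t * ((j:ℝ) + 1))
        = Real.exp t * Real.cosh t ^ n := by
      rw [← a_moment t n, Finset.mul_sum]
      apply Finset.sum_congr rfl
      intro j _
      rw [mul_add, Real.exp_add, mul_one]
      ring
    have inner2 : ∑ j ∈ Finset.Icc (-(n:ℤ)) (n:ℤ), a n j * Real.exp (t * ((j:ℝ) - 1))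
        = Real.exp (-t) * Real.cosh t ^ n := by
      rw [← a_moment t n, Finset.mul_sum]
      apply Finset.sum_congr rfl
      intro j _
      rw [mul_sub, Real.exp_sub, mul_one, Real.exp_neg]
      field_simp
    have expand : ∑ k ∈ Finset.Icc (-((n+1:ℕ):ℤ)) ((n+1:ℕ):ℤ), a (n+1) k * Real.exp (t * k)
        = (∑ k ∈ Finset.Icc (-(n+1:ℤ)) ((n:ℤ)+1), a n (k + (-1)) * Real.exp (t * k)) / 2
          + (∑ k ∈ Finset.Icc (-(n+1:ℤ)) ((n:ℤ)+1), a n (k + 1) * Real.exp (t * k)) / 2 := by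
      rw [show (-((n+1:ℕ):ℤ)) = (-(n+1:ℤ)) by push_cast; ring,
          show ((n+1:ℕ):ℤ) = ((n:ℤ)+1) by push_cast; ring,
          Finset.sum_div, Finset.sum_div, ← Finset.sum_add_distrib]
      apply Finset.sum_congr rfl
      intro k _
      rw [a_succ, sub_eq_add_neg]
      ring
    rw [expand, shift1, shift2, inner1, inner2, Real.cosh_eq]
    ring

open Polynomial.Chebyshev in
lemma X_pow_eq : ∀ n : ℕ, (X : ℝ[X])^n
    = ∑ k ∈ Finset.Icc (-(n:ℤ)) (n:ℤ), a n k • T ℝ k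
  | 0 => by
    norm_num [a, T_zero]
  | (n+1) => by
    have a_succ : ∀ k : ℤ, a (n+1) k = (a n (k-1) + a n (k+1)) / 2 := fun k => rfl
    have hXT : ∀ k : ℤ, (X : ℝ[X]) * T ℝ k
        = (2⁻¹ : ℝ) • (T ℝ (k+1) + T ℝ (k-1)) := by
      intro k
      have h := T_add_two ℝ (k-1)
      rw [show k-1+2 = k+1 by ring, show k-1+1 = k by ring] at h
      have h2 : T ℝ (k+1) + T ℝ (k-1) = 2 * X * T ℝ k := by rw [h]; ring
      rw [h2, Polynomial.smul_eq_C_mul]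
      rw [show ((2 : ℝ[X])) = Polynomial.C (2:ℝ) from (map_ofNat Polynomial.C 2).symm]
      rw [show (Polynomial.C (2⁻¹:ℝ)) * (Polynomial.C (2:ℝ) * X * T ℝ k)
            = (Polynomial.C (2⁻¹:ℝ) * Polynomial.C (2:ℝ)) * (X * T ℝ k) by ring]
      rw [← Polynomial.C_mul]
      norm_num
    have shift1 := sum_w_smul_shift (fun j => a n j / 2) n
      (fun k hk => by show a n k / 2 = 0; rw [a_eq_zero n k hk]; norm_num) (-1) (by norm_num) (T ℝ)
    have shift2 := sum_w_smul_shift (fun j => a n j / 2) n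
      (fun k hk => by show a n k / 2 = 0; rw [a_eq_zero n k hk]; norm_num) 1 (by norm_num) (T ℝ)
    simp only [sub_neg_eq_add] at shift1
    calc (X : ℝ[X])^(n+1) = X * X^n := by ring
      _ = X * ∑ j ∈ Finset.Icc (-(n:ℤ)) (n:ℤ), a n j • T ℝ j := by rw [X_pow_eq n]
      _ = ∑ j ∈ Finset.Icc (-(n:ℤ)) (n:ℤ), (a n j / 2) • (T ℝ (j+1) + T ℝ (j-1)) := by
          rw [Finset.mul_sum]
          apply Finset.sum_congr rfl
          intro j _
          rw [mul_smul_comm, hXT j, smul_smul]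
          rw [div_eq_mul_inv, smul_add]
      _ = (∑ j ∈ Finset.Icc (-(n:ℤ)) (n:ℤ), (a n j / 2) • T ℝ (j+1))
          + (∑ j ∈ Finset.Icc (-(n:ℤ)) (n:ℤ), (a n j / 2) • T ℝ (j-1)) := by
          rw [← Finset.sum_add_distrib]
          exact Finset.sum_congr rfl fun j _ => smul_add _ _ _
      _ = (∑ k ∈ Finset.Icc (-(n+1:ℤ)) ((n:ℤ)+1), (a n (k + (-1)) / 2) • T ℝ k)
          + (∑ k ∈ Finset.Icc (-(n+1:ℤ)) ((n:ℤ)+1), (a n (k + 1) / 2) • T ℝ k) := by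
          rw [shift1, shift2]
      _ = ∑ k ∈ Finset.Icc (-(n+1:ℤ)) ((n:ℤ)+1), a (n+1) k • T ℝ k := by
          rw [← Finset.sum_add_distrib]
          apply Finset.sum_congr rfl
          intro k _
          rw [← add_smul, a_succ, sub_eq_add_neg, ← add_div]
      _ = ∑ k ∈ Finset.Icc (-((n+1:ℕ):ℤ)) ((n+1:ℕ):ℤ), a (n+1) k • T ℝ k := by
          congr 1 <;> push_cast <;> ring

lemma a_tail (n D : ℕ) (hn : 1 ≤ n) :
    ∑ k ∈ (Finset.Icc (-(n:ℤ)) (n:ℤ)).filter (fun k => (D:ℤ) ≤ |k|), a n k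
      ≤ 2 * Real.exp (-(D:ℝ)^2 / (2*n)) := by
  set t : ℝ := (D : ℝ) / n with ht
  have hn0 : (0:ℝ) < n := by positivity
  have hn' : (n:ℝ) ≠ 0 := ne_of_gt hn0
  have htnn : 0 ≤ t := by positivity
  have step1 : ∑ k ∈ (Finset.Icc (-(n:ℤ)) (n:ℤ)).filter (fun k => (D:ℤ) ≤ |k|), a n k
      ≤ ∑ k ∈ Finset.Icc (-(n:ℤ)) (n:ℤ),
          a n k * ((Real.exp (t*k) + Real.exp (-t*k)) * Real.exp (-(t*D))) := by
    apply le_trans (Finset.sum_le_sum ?_)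
      (Finset.sum_le_sum_of_subset_of_nonneg (Finset.filter_subset _ _) ?_)
    · intro k hk
      simp only [Finset.mem_filter] at hk
      have habs : Real.exp (t * (|k| : ℤ)) ≤ Real.exp (t*k) + Real.exp (-t*k) := by
        rcases abs_cases k with ⟨h1, _⟩ | ⟨h1, _⟩
        · rw [h1]
          have := Real.exp_pos (-t*(k:ℝ))
          linarith
        · rw [h1]
          push_cast
          rw [show t * -(k:ℝ) = -t * (k:ℝ) by ring]
          have := Real.exp_pos (t*(k:ℝ))
          linarith
      have hD : Real.exp (t * D) ≤ Real.exp (t * (|k| : ℤ)) :=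
        Real.exp_le_exp.2 (mul_le_mul_of_nonneg_left (by exact_mod_cast hk.2) htnn)
      have h1 : 1 ≤ (Real.exp (t*k) + Real.exp (-t*k)) * Real.exp (-(t*D)) := by
        rw [Real.exp_neg, ← div_eq_mul_inv, le_div_iff₀ (Real.exp_pos _), one_mul]
        exact le_trans hD habs
      calc a n k = a n k * 1 := (mul_one _).symm
        _ ≤ _ := mul_le_mul_of_nonneg_left h1 (a_nonneg n k)
    · intro k _ _
      have := a_nonneg n k
      have e1 := Real.exp_pos (t*(k:ℝ))
      have e2 := Real.exp_pos (-t*(k:ℝ))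
      have e3 := Real.exp_pos (-(t*(D:ℝ)))
      positivity
  have step2 : ∑ k ∈ Finset.Icc (-(n:ℤ)) (n:ℤ),
      a n k * ((Real.exp (t*k) + Real.exp (-t*k)) * Real.exp (-(t*D)))
      = Real.exp (-(t*D)) * (Real.cosh t ^ n + Real.cosh (-t) ^ n) := by
    rw [← a_moment t n, ← a_moment (-t) n, mul_add, Finset.mul_sum, Finset.mul_sum,
        ← Finset.sum_add_distrib]
    apply Finset.sum_congr rfl
    intro k _
    ring
  have step3 : Real.exp (-(t*D)) * (Real.cosh t ^ n + Real.cosh (-t) ^ n)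
      ≤ 2 * Real.exp (-(D:ℝ)^2 / (2*n)) := by
    rw [Real.cosh_neg]
    have hch : Real.cosh t ^ n ≤ Real.exp ((n:ℝ) * (t^2/2)) := by
      calc Real.cosh t ^ n ≤ Real.exp (t^2/2) ^ n :=
            pow_le_pow_left₀ (le_of_lt (Real.cosh_pos t)) (Real.cosh_le_exp_half_sq t) n
        _ = Real.exp ((n:ℝ) * (t^2/2)) := by rw [← Real.exp_nat_mul]
    calc Real.exp (-(t*D)) * (Real.cosh t ^ n + Real.cosh t ^ n)
        ≤ Real.exp (-(t*D)) * (2 * Real.exp ((n:ℝ) * (t^2/2))) := by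
          apply mul_le_mul_of_nonneg_left _ (Real.exp_pos _).le
          linarith
      _ = 2 * Real.exp (-(t*D) + (n:ℝ) * (t^2/2)) := by rw [Real.exp_add]; ring
      _ = 2 * Real.exp (-(D:ℝ)^2 / (2*n)) := by
          congr 1
          rw [ht]
          field_simp
          ring
  linarith [le_trans step1 (le_of_eq step2), step3]

section MatrixLemmas

variable {S : Type*} [Fintype S] [DecidableEq S]

lemma conj_pow (M N B : Matrix S S ℝ) (h : M * N = 1) (m : ℕ) :
    (M * B * N) ^ m = M * B ^ m * N := by
  induction m with
  | zero => rw [pow_zero, pow_zero, Matrix.mul_one, h]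
  | succ m ih =>
    have h' : N * M = 1 := mul_eq_one_comm.mp h
    rw [pow_succ, pow_succ, ih]
    calc M * B ^ m * N * (M * B * N) = M * B ^ m * ((N * M) * (B * N)) := by
          simp only [Matrix.mul_assoc]
      _ = M * B ^ m * (B * N) := by rw [h', Matrix.one_mul]
      _ = M * (B ^ m * B) * N := by simp only [Matrix.mul_assoc]

lemma aeval_conj (M N B : Matrix S S ℝ) (h : M * N = 1) (p : ℝ[X]) :
    Polynomial.aeval (M * B * N) p = M * (Polynomial.aeval B p) * N := by
  rw [Polynomial.aeval_eq_sum_range (M*B*N), Polynomial.aeval_eq_sum_range (p := p) B,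
      Matrix.mul_sum, Matrix.sum_mul]
  apply Finset.sum_congr rfl
  intro i _
  rw [conj_pow M N B h i, Matrix.mul_smul, Matrix.smul_mul]

lemma aeval_diagonal (d : S → ℝ) (p : ℝ[X]) :
    Polynomial.aeval (Matrix.diagonal d) p = Matrix.diagonal (fun i => p.eval (d i)) := by
  rw [Polynomial.aeval_eq_sum_range]
  ext i j
  rw [Matrix.sum_apply]
  by_cases hij : i = j
  · subst hij
    simp only [Matrix.smul_apply, Matrix.diagonal_pow, Matrix.diagonal_apply_eq,
      Pi.pow_apply, smul_eq_mul]
    rw [Polynomial.eval_eq_sum_range]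
  · simp [Matrix.diagonal_pow, Matrix.diagonal_apply_ne _ hij]

lemma entry_bound (U : Matrix S S ℝ) (hU : U * star U = 1) (v : S → ℝ) (c : ℝ)
    (hc : 0 ≤ c) (hv : ∀ i, |v i| ≤ c) (r s : S) :
    |(U * Matrix.diagonal v * star U) r s| ≤ c := by
  have hrow : ∀ x, ∑ i, U x i ^ 2 = 1 := by
    intro x
    have h1 : (U * star U) x x = (1 : Matrix S S ℝ) x x := by rw [hU]
    rw [Matrix.mul_apply] at h1
    simp only [Matrix.star_apply, star_trivial, Matrix.one_apply_eq] at h1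
    rw [← h1]
    apply Finset.sum_congr rfl
    intro i _
    ring
  have hent : (U * Matrix.diagonal v * star U) r s = ∑ i, U r i * v i * U s i := by
    rw [Matrix.mul_apply]
    apply Finset.sum_congr rfl
    intro i _
    rw [Matrix.mul_diagonal, Matrix.star_apply, star_trivial]
  rw [hent]
  have cs : (∑ i, |U r i| * |U s i|) ^ 2 ≤ 1 := by
    calc (∑ i, |U r i| * |U s i|) ^ 2
        ≤ (∑ i, |U r i| ^ 2) * (∑ i, |U s i| ^ 2) :=
          Finset.sum_mul_sq_le_sq_mul_sq _ _ _
      _ = 1 := by simp only [sq_abs]; rw [hrow r, hrow s, one_mul]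
  have csnn : 0 ≤ ∑ i, |U r i| * |U s i| :=
    Finset.sum_nonneg fun i _ => mul_nonneg (abs_nonneg _) (abs_nonneg _)
  have cs1 : ∑ i, |U r i| * |U s i| ≤ 1 := by nlinarith
  calc |∑ i, U r i * v i * U s i| ≤ ∑ i, |U r i * v i * U s i| :=
        Finset.abs_sum_le_sum_abs _ _
    _ ≤ ∑ i, c * (|U r i| * |U s i|) := by
        apply Finset.sum_le_sum
        intro i _
        rw [abs_mul, abs_mul]
        calc |U r i| * |v i| * |U s i| ≤ |U r i| * c * |U s i| := by
              apply mul_le_mul_of_nonneg_right _ (abs_nonneg _)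
              exact mul_le_mul_of_nonneg_left (hv i) (abs_nonneg _)
          _ = c * (|U r i| * |U s i|) := by ring
    _ = c * ∑ i, |U r i| * |U s i| := by rw [Finset.mul_sum]
    _ ≤ c * 1 := mul_le_mul_of_nonneg_left cs1 hc
    _ = c := mul_one c

end MatrixLemmas

open Polynomial.Chebyshev in
lemma natDegree_T_le_aux : ∀ m : ℕ,
    (T ℝ (m:ℤ)).natDegree ≤ m ∧ (T ℝ ((m:ℤ)+1)).natDegree ≤ m+1
  | 0 => by
    norm_num [T_zero, T_one]
  | (m+1) => by
    obtain ⟨h1, h2⟩ := natDegree_T_le_aux m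
    constructor
    · push_cast
      exact h2
    · push_cast
      rw [show ((m:ℤ)+1+1) = (m:ℤ)+2 by ring, T_add_two]
      apply le_trans (Polynomial.natDegree_sub_le _ _)
      rw [max_le_iff]
      constructor
      · calc (2 * Polynomial.X * T ℝ ((m:ℤ)+1)).natDegree
            ≤ (2 * Polynomial.X : ℝ[X]).natDegree + (T ℝ ((m:ℤ)+1)).natDegree :=
              Polynomial.natDegree_mul_le
          _ ≤ 1 + (m+1) := by
              apply add_le_add _ h2
              apply le_trans Polynomial.natDegree_mul_le
              simp [Polynomial.natDegree_X]
          _ ≤ m + 2 := by omega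
      · omega
    
open Polynomial.Chebyshev in
lemma natDegree_T_le (k : ℤ) : (T ℝ k).natDegree ≤ k.natAbs := by
  rcases Int.natAbs_eq k with hk | hk
  · rw [hk]; exact (natDegree_T_le_aux k.natAbs).1
  · have e : T ℝ k = T ℝ (k.natAbs : ℤ) := by
      conv_lhs => rw [hk]
      rw [T_neg]
    rw [e]
    exact (natDegree_T_le_aux k.natAbs).1

open Polynomial.Chebyshev in
lemma abs_eval_T_le (x : ℝ) (hx : |x| ≤ 1) (k : ℤ) : |(T ℝ k).eval x| ≤ 1 := by
  rw [abs_le] at hx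
  rw [show x = Real.cos (Real.arccos x) from (Real.cos_arccos hx.1 hx.2).symm, T_real_cos]
  exact Real.abs_cos_le_one _

section Path

variable {S : Type*} [Fintype S] [DecidableEq S]

lemma path_of_pow_ne_zero (K : Matrix S S ℝ) (s : S) :
    ∀ (m : ℕ) (x : S), (K ^ m) x s ≠ 0 →
      ∃ p : Fin (m + 1) → S, p 0 = x ∧ p (Fin.last m) = s ∧
        ∀ i : Fin m, K (p i.castSucc) (p i.succ) ≠ 0
  | 0, x, h => by
    have hxs : x = s := by
      by_contra hne
      rw [pow_zero, Matrix.one_apply_ne hne] at h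
      exact h rfl
    exact ⟨fun _ => x, rfl, hxs ▸ rfl, fun i => i.elim0⟩
  | (m+1), x, h => by
    rw [pow_succ', Matrix.mul_apply] at h
    obtain ⟨y, -, hy⟩ := Finset.exists_ne_zero_of_sum_ne_zero h
    have h1 : K x y ≠ 0 := left_ne_zero_of_mul hy
    have h2 : (K ^ m) y s ≠ 0 := right_ne_zero_of_mul hy
    obtain ⟨p, hp0, hpl, hpt⟩ := path_of_pow_ne_zero K s m y h2
    refine ⟨Fin.cons x p, Fin.cons_zero _ _, ?_, ?_⟩
    · rw [show Fin.last (m+1) = (Fin.last m).succ from rfl, Fin.cons_succ]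
      exact hpl
    · intro i
      refine Fin.cases ?_ ?_ i
      · simpa [Fin.cons_zero, Fin.cons_succ, hp0] using h1
      · intro j
        rw [← Fin.succ_castSucc, Fin.cons_succ, Fin.cons_succ]
        exact hpt j

end Path

open Matrix Polynomial.Chebyshev in
lemma carne {S : Type*} [Fintype S] [DecidableEq S] [Nonempty S]
    (K : Matrix S S ℝ) (μt : S → ℝ)
    (hK0 : ∀ x y, 0 ≤ K x y) (hKrow : ∀ x, ∑ y, K x y = 1)
    (hμpos : ∀ x, 0 < μt x)
    (hrev : ∀ x y, μt x * K x y = μt y * K y x)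
    (r s : S) (D : ℕ)
    (hzero : ∀ m : ℕ, m < D → (K ^ m) r s = 0)
    (n : ℕ) (hn : 1 ≤ n) :
    (K ^ n) r s ≤ 2 * Real.sqrt (μt s / μt r) * Real.exp (-(D:ℝ)^2 / (2*n)) := by
  classical
  have hsq : ∀ x, 0 < Real.sqrt (μt x) := fun x => Real.sqrt_pos.2 (hμpos x)
  have hsq2 : ∀ x, Real.sqrt (μt x) * Real.sqrt (μt x) = μt x :=
    fun x => Real.mul_self_sqrt (hμpos x).le
  set A : Matrix S S ℝ :=
    Matrix.of (fun x y => Real.sqrt (μt x) * K x y / Real.sqrt (μt y)) with hAdef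
  have hA : A.IsHermitian := by
    rw [Matrix.IsHermitian]
    ext x y
    show star (A y x) = A x y
    rw [star_trivial]
    show Real.sqrt (μt y) * K y x / Real.sqrt (μt x)
        = Real.sqrt (μt x) * K x y / Real.sqrt (μt y)
    rw [div_eq_div_iff (hsq x).ne' (hsq y).ne']
    linear_combination K y x * hsq2 y - K x y * hsq2 x + hrev y x
  set Dp : Matrix S S ℝ := Matrix.diagonal (fun x => Real.sqrt (μt x)) with hDp
  set Dm : Matrix S S ℝ := Matrix.diagonal (fun x => (Real.sqrt (μt x))⁻¹) with hDm
  have hDmDp : Dm * Dp = 1 := by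
    rw [hDm, hDp, Matrix.diagonal_mul_diagonal]
    have he : (fun x => (Real.sqrt (μt x))⁻¹ * Real.sqrt (μt x)) = fun _ : S => (1:ℝ) :=
      funext fun x => inv_mul_cancel₀ (hsq x).ne'
    rw [he, Matrix.diagonal_one]
  have hAconj : A = Dp * K * Dm := by
    ext x y
    rw [Matrix.mul_diagonal, Matrix.diagonal_mul]
    show Real.sqrt (μt x) * K x y / Real.sqrt (μt y) = _
    rw [div_eq_mul_inv]
  have hKconj : K = Dm * A * Dp := by
    rw [hAconj]
    symm
    calc Dm * (Dp * K * Dm) * Dp = (Dm * Dp) * (K * (Dm * Dp)) := by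
          simp only [Matrix.mul_assoc]
      _ = K := by rw [hDmDp, Matrix.one_mul, Matrix.mul_one]
  set lam : S → ℝ := hA.eigenvalues with hlamdef
  set V : Matrix S S ℝ := (Matrix.IsHermitian.eigenvectorUnitary hA : Matrix S S ℝ) with hVdef
  have hV : V * star V = 1 :=
    Matrix.mem_unitaryGroup_iff.mp (Matrix.IsHermitian.eigenvectorUnitary hA).2
  have hspec : A = V * Matrix.diagonal lam * star V := by
    have h := hA.spectral_theorem
    rw [RCLike.ofReal_real_eq_id, Function.id_comp] at h
    exact h
  have hlam : ∀ i, |lam i| ≤ 1 := by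
    intro i
    set v : S → ℝ := ⇑(hA.eigenvectorBasis i) with hv
    have hAv : A *ᵥ v = lam i • v := hA.mulVec_eigenvectorBasis i
    have hvne : v ≠ 0 := by
      intro h0
      apply hA.eigenvectorBasis.orthonormal.ne_zero i
      ext x
      exact congrFun h0 x
    set w : S → ℝ := fun x => (Real.sqrt (μt x))⁻¹ * v x with hw
    have hKw : ∀ x, ∑ y, K x y * w y = lam i * w x := by
      intro x
      have hAvx : ∑ y, A x y * v y = lam i * v x := by
        have h := congrFun hAv x
        simpa [Matrix.mulVec, dotProduct] using h
      calc ∑ y, K x y * w y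
          = (Real.sqrt (μt x))⁻¹ * ∑ y, A x y * v y := by
            rw [Finset.mul_sum]
            apply Finset.sum_congr rfl
            intro y _
            show K x y * ((Real.sqrt (μt y))⁻¹ * v y)
              = (Real.sqrt (μt x))⁻¹ * (Real.sqrt (μt x) * K x y / Real.sqrt (μt y) * v y)
            have h1 : Real.sqrt (μt x) ≠ 0 := (hsq x).ne'
            have h2 : Real.sqrt (μt y) ≠ 0 := (hsq y).ne'
            field_simp
        _ = lam i * w x := by rw [hAvx, hw]; ring
    obtain ⟨x0, hx0⟩ := Finite.exists_max (fun x => |w x|)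
    have hx0pos : 0 < |w x0| := by
      have hex : ∃ x, w x ≠ 0 := by
        by_contra hc
        push_neg at hc
        apply hvne
        funext x
        have h := hc x
        rw [hw] at h
        rcases mul_eq_zero.1 h with h' | h'
        · exact absurd h' (inv_ne_zero (hsq x).ne')
        · exact h'
      obtain ⟨x, hx⟩ := hex
      exact lt_of_lt_of_le (abs_pos.2 hx) (hx0 x)
    have key : |lam i| * |w x0| ≤ 1 * |w x0| := by
      rw [one_mul]
      calc |lam i| * |w x0| = |lam i * w x0| := (abs_mul _ _).symm
        _ = |∑ y, K x0 y * w y| := by rw [hKw x0]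
        _ ≤ ∑ y, |K x0 y * w y| := Finset.abs_sum_le_sum_abs _ _
        _ ≤ ∑ y, K x0 y * |w x0| := by
            apply Finset.sum_le_sum
            intro y _
            rw [abs_mul, abs_of_nonneg (hK0 x0 y)]
            exact mul_le_mul_of_nonneg_left (hx0 y) (hK0 x0 y)
        _ = |w x0| := by rw [← Finset.sum_mul, hKrow x0, one_mul]
    exact le_of_mul_le_mul_right key hx0pos
  set ρ : ℝ := Real.sqrt (μt s / μt r) with hρ
  have hρ' : ρ = Real.sqrt (μt s) * (Real.sqrt (μt r))⁻¹ := by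
    rw [hρ, Real.sqrt_div (hμpos s).le, div_eq_mul_inv]
  have hρnn : 0 ≤ ρ := Real.sqrt_nonneg _
  have gbound : ∀ p : ℝ[X], (∀ i, |p.eval (lam i)| ≤ 1) →
      |(Polynomial.aeval K p) r s| ≤ ρ := by
    intro p hp
    have hKp : Polynomial.aeval K p = Dm * (Polynomial.aeval A p) * Dp := by
      conv_lhs => rw [hKconj]
      exact aeval_conj Dm Dp A hDmDp p
    have hAp : Polynomial.aeval A p
        = V * Matrix.diagonal (fun i => p.eval (lam i)) * star V := by
      conv_lhs => rw [hspec]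
      rw [aeval_conj V (star V) (Matrix.diagonal lam) hV p, aeval_diagonal]
    have hent : (Polynomial.aeval K p) r s
        = (Real.sqrt (μt r))⁻¹
          * ((V * Matrix.diagonal (fun i => p.eval (lam i)) * star V) r s)
          * Real.sqrt (μt s) := by
      rw [hKp, hAp, hDm, hDp, Matrix.mul_diagonal, Matrix.diagonal_mul]
    have hZ := entry_bound V hV (fun i => p.eval (lam i)) 1 zero_le_one hp r s
    rw [hent, abs_mul, abs_mul, abs_of_nonneg (inv_nonneg.2 (Real.sqrt_nonneg (μt r))),
      abs_of_nonneg (Real.sqrt_nonneg (μt s))]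
    calc (Real.sqrt (μt r))⁻¹
          * |(V * Matrix.diagonal (fun i => p.eval (lam i)) * star V) r s|
          * Real.sqrt (μt s)
        ≤ (Real.sqrt (μt r))⁻¹ * 1 * Real.sqrt (μt s) := by
          apply mul_le_mul_of_nonneg_right _ (Real.sqrt_nonneg _)
          exact mul_le_mul_of_nonneg_left hZ (inv_nonneg.2 (Real.sqrt_nonneg _))
      _ = ρ := by rw [hρ']; ring
  have hKn : (K^n) r s = ∑ k ∈ Finset.Icc (-(n:ℤ)) (n:ℤ),
      a n k * ((Polynomial.aeval K (T ℝ k)) r s) := by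
    have h := congrArg (fun p : ℝ[X] => (Polynomial.aeval K p) r s) (X_pow_eq n)
    simp only [map_pow, Polynomial.aeval_X, map_sum, _root_.map_smul, Matrix.sum_apply,
      Matrix.smul_apply, smul_eq_mul] at h
    exact h
  have hg0 : ∀ k : ℤ, k.natAbs < D → (Polynomial.aeval K (T ℝ k)) r s = 0 := by
    intro k hk
    rw [Polynomial.aeval_eq_sum_range, Matrix.sum_apply]
    apply Finset.sum_eq_zero
    intro i hi
    rw [Finset.mem_range] at hi
    have hiD : i < D := by
      have hdeg := natDegree_T_le k
      omega
    rw [Matrix.smul_apply, hzero i hiD, smul_zero]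
  have hfil : ∑ k ∈ (Finset.Icc (-(n:ℤ)) (n:ℤ)).filter (fun k => (D:ℤ) ≤ |k|),
      a n k * ((Polynomial.aeval K (T ℝ k)) r s)
      = ∑ k ∈ Finset.Icc (-(n:ℤ)) (n:ℤ), a n k * ((Polynomial.aeval K (T ℝ k)) r s) := by
    apply Finset.sum_filter_of_ne
    intro k _ hne
    by_contra hDk
    push_neg at hDk
    apply hne
    have hknat : k.natAbs < D := by
      rw [Int.abs_eq_natAbs] at hDk
      exact_mod_cast hDk
    rw [hg0 k hknat, mul_zero]
  rw [hKn, ← hfil]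
  calc ∑ k ∈ (Finset.Icc (-(n:ℤ)) (n:ℤ)).filter (fun k => (D:ℤ) ≤ |k|),
        a n k * ((Polynomial.aeval K (T ℝ k)) r s)
      ≤ ∑ k ∈ (Finset.Icc (-(n:ℤ)) (n:ℤ)).filter (fun k => (D:ℤ) ≤ |k|), a n k * ρ := by
        apply Finset.sum_le_sum
        intro k _
        apply mul_le_mul_of_nonneg_left _ (a_nonneg n k)
        exact le_trans (le_abs_self _) (gbound (T ℝ k) (fun i => abs_eval_T_le (lam i) (hlam i) k))
    _ = (∑ k ∈ (Finset.Icc (-(n:ℤ)) (n:ℤ)).filter (fun k => (D:ℤ) ≤ |k|), a n k) * ρ := by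
        rw [Finset.sum_mul]
    _ ≤ (2 * Real.exp (-(D:ℝ)^2 / (2*n))) * ρ :=
        mul_le_mul_of_nonneg_right (a_tail n D hn) hρnn
    _ = 2 * ρ * Real.exp (-(D:ℝ)^2 / (2*n)) := by ring

end VC19

end VaropoulosCarneAux

/-- Varopoulos–Carne bound and its consequence for hitting probabilities.
Let `K` be the transition matrix of a discrete-time Markov chain on a finite state
space, reversible with respect to the positive measure `μt`. Suppose every path
`r = p 0, p 1, …, p m = s` of positive transition probability has length `m ≥ D`
(i.e. the graph distance from `r` to `s` is at least `D`). Then for `n ≥ 1`: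
`P_r(Y_n = s) = (K^n) r s ≤ 2 √(μt s / μt r) exp(-D²/(2n))`, and if `(Y_k)` is a
realization of the chain started at `r` (so that `P {Y_k = s} = (K^k) r s`), then
`P(∃ k ≤ n, Y_k = s) ≤ 2 n √(μt s / μt r) exp(-D²/(2n))`. -/
theorem stmt_19 {S : Type*} [Fintype S] [DecidableEq S] [Nonempty S]
    (K : Matrix S S ℝ) (μt : S → ℝ)
    (hK0 : ∀ x y, 0 ≤ K x y) (hKrow : ∀ x, ∑ y, K x y = 1)
    (hμpos : ∀ x, 0 < μt x)
    (hrev : ∀ x y, μt x * K x y = μt y * K y x)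
    (r s : S) (n : ℕ) (hn : 1 ≤ n) (D : ℕ)
    (hdist : ∀ (m : ℕ) (p : Fin (m + 1) → S), p 0 = r → p (Fin.last m) = s →
      (∀ i : Fin m, K (p i.castSucc) (p i.succ) ≠ 0) → D ≤ m)
    {Ω : Type*} [MeasurableSpace Ω] (P : Measure Ω) [IsProbabilityMeasure P]
    (Y : ℕ → Ω → S) (hYmeas : ∀ k z, MeasurableSet {ω | Y k ω = z})
    (hlaw : ∀ (k : ℕ) (z : S), P {ω | Y k ω = z} = ENNReal.ofReal ((K ^ k) r z)) :
    (K ^ n) r s ≤ 2 * Real.sqrt (μt s / μt r) * Real.exp (-(D : ℝ) ^ 2 / (2 * n)) ∧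
      P {ω | ∃ k : ℕ, 1 ≤ k ∧ k ≤ n ∧ Y k ω = s} ≤
        ENNReal.ofReal (2 * n * Real.sqrt (μt s / μt r) *
          Real.exp (-(D : ℝ) ^ 2 / (2 * n))) := by
  classical
  have hzero : ∀ m : ℕ, m < D → (K ^ m) r s = 0 := by
    intro m hm
    by_contra h
    obtain ⟨p, hp0, hpl, hpt⟩ := VC19.path_of_pow_ne_zero K s m r h
    exact absurd (hdist m p hp0 hpl hpt) (by omega)
  have main : ∀ k : ℕ, 1 ≤ k →
      (K ^ k) r s ≤ 2 * Real.sqrt (μt s / μt r) * Real.exp (-(D:ℝ)^2/(2*k)) :=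
    fun k hk => VC19.carne K μt hK0 hKrow hμpos hrev r s D hzero k hk
  refine ⟨main n hn, ?_⟩
  have hset : {ω | ∃ k : ℕ, 1 ≤ k ∧ k ≤ n ∧ Y k ω = s}
      = ⋃ k ∈ Finset.Icc 1 n, {ω | Y k ω = s} := by
    ext ω
    simp only [Set.mem_setOf_eq, Set.mem_iUnion, Finset.mem_Icc, exists_prop]
    constructor
    · rintro ⟨k, h1, h2, h3⟩; exact ⟨k, ⟨h1, h2⟩, h3⟩
    · rintro ⟨k, ⟨h1, h2⟩, h3⟩; exact ⟨k, h1, h2, h3⟩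
  rw [hset]
  calc P (⋃ k ∈ Finset.Icc 1 n, {ω | Y k ω = s})
      ≤ ∑ k ∈ Finset.Icc 1 n, P {ω | Y k ω = s} := measure_biUnion_finset_le _ _
    _ ≤ ∑ _k ∈ Finset.Icc 1 n, ENNReal.ofReal
          (2 * Real.sqrt (μt s / μt r) * Real.exp (-(D:ℝ)^2/(2*n))) := by
        apply Finset.sum_le_sum
        intro k hk
        rw [Finset.mem_Icc] at hk
        rw [hlaw k s]
        apply ENNReal.ofReal_le_ofReal
        have hk1 : (1:ℝ) ≤ (k:ℝ) := by exact_mod_cast hk.1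
        calc (K ^ k) r s
            ≤ 2 * Real.sqrt (μt s / μt r) * Real.exp (-(D:ℝ)^2/(2*k)) := main k hk.1
          _ ≤ 2 * Real.sqrt (μt s / μt r) * Real.exp (-(D:ℝ)^2/(2*n)) := by
              apply mul_le_mul_of_nonneg_left _ (by positivity)
              apply Real.exp_le_exp.2
              rw [neg_div, neg_div, neg_le_neg_iff]
              have h2k : (0:ℝ) < 2*(k:ℝ) := by linarith
              have h2n : (2:ℝ)*(k:ℝ) ≤ 2*(n:ℝ) := by
                have : (k:ℝ) ≤ (n:ℝ) := by exact_mod_cast hk.2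
                linarith
              exact div_le_div_of_nonneg_left (by positivity) h2k h2n
    _ = (n : ENNReal) * ENNReal.ofReal
          (2 * Real.sqrt (μt s / μt r) * Real.exp (-(D:ℝ)^2/(2*n))) := by
        rw [Finset.sum_const, Nat.card_Icc, nsmul_eq_mul]
        norm_num
    _ = ENNReal.ofReal (2 * n * Real.sqrt (μt s / μt r)
          * Real.exp (-(D:ℝ)^2/(2*n))) := by
        rw [← ENNReal.ofReal_natCast n, ← ENNReal.ofReal_mul (by positivity)]
        congr 1
        ring
end
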